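/- In the setting of extending a Faigle geometry by a new atom: with F a Faigle geometry family on P, a ∈ P, T := {X ∈ F : a ∉ X and no cover of X in F contains a}, N := {X ∪ {a} : X ∈ T}, and G := F ∪ N, one has F ∩ N = ∅; moreover, if X ∈ N ∪ T and Y ∈ G with Y ⊆ X, then Y ∈ N ∪ T, and if furthermore X ∈ T then Y ∈ T. -/

import Mathlib

/-- `X` is a down-set of the poset `P`. -/
def IsDownSet {P : Type*} [PartialOrder P] (X : Set P) : Prop :=
  ∀ ⦃x⦄, x ∈ X → ∀ ⦃y⦄, y ≤ x → y ∈ X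

/-- `Y` covers `X` in the poset `(F, ⊆)`. -/
def CoversIn {P : Type*} (F : Set (Set P)) (X Y : Set P) : Prop :=
  X ⊂ Y ∧ ∀ Z ∈ F, ¬(X ⊂ Z ∧ Z ⊂ Y)

/-- The closure operator associated to the closure system `F`:
`cl(X) = ⋂ {Y ∈ F : X ⊆ Y}`. -/
def clF {P : Type*} (F : Set (Set P)) (X : Set P) : Set P :=
  ⋂₀ {Y | Y ∈ F ∧ X ⊆ Y}

/-- `(P, F)` is a Faigle geometry. -/
structure IsFaigle {P : Type*} [PartialOrder P] [Finite P] (F : Set (Set P)) : Prop where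
  univ_mem : Set.univ ∈ F
  inter_mem : ∀ X ∈ F, ∀ Y ∈ F, X ∩ Y ∈ F
  down : ∀ X ∈ F, IsDownSet X
  empty_mem : ∅ ∈ F
  Iic_mem : ∀ u : P, Set.Iic u ∈ F
  Iio_mem : ∀ u : P, Set.Iio u ∈ F
  cp : ∀ (u : P), ∀ X ∈ F, u ∉ X → Set.Iio u ⊆ X →
      ∃ Y ∈ F, u ∈ Y ∧ CoversIn F X Y

/-- Adjoining a single new element always yields a cover in any family. -/
lemma coversIn_insert_one {P : Type*} {F : Set (Set P)} {X : Set P} {a : P}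
    (h : a ∉ X) : CoversIn F X (X ∪ {a}) := by
  constructor
  · refine ⟨Set.subset_union_left, fun hsub => h ?_⟩
    exact hsub (by simp)
  · rintro Z _ ⟨h1, h2⟩
    obtain ⟨z, hzZ, hzX⟩ := Set.exists_of_ssubset h1
    have hz : z = a := by
      rcases h2.1 hzZ with h | h
      · exact absurd h hzX
      · simpa using h
    subst hz
    have : X ∪ {z} ⊆ Z := Set.union_subset h1.1 (by simpa using hzZ)
    exact h2.2 this

/-- Key lemma: membership in `T` is inherited by smaller members of `F`. -/
lemma T_downward {P : Type*} [PartialOrder P] [Finite P] {F : Set (Set P)}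
    (hF : IsFaigle F) (a : P) {X Y : Set P}
    (hXF : X ∈ F) (hXa : a ∉ X) (hXT : ∀ W ∈ F, CoversIn F X W → a ∉ W)
    (hYF : Y ∈ F) (hYX : Y ⊆ X) :
    a ∉ Y ∧ ∀ W ∈ F, CoversIn F Y W → a ∉ W := by
  have hYa : a ∉ Y := fun h => hXa (hYX h)
  refine ⟨hYa, fun Z hZF hcov haZ => ?_⟩
  -- First: Z ∩ X = Y
  have hZXmem : Z ∩ X ∈ F := hF.inter_mem Z hZF X hXF
  have hYsub : Y ⊆ Z ∩ X := Set.subset_inter hcov.1.1 hYX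
  have hZX : Z ∩ X = Y := by
    by_contra hne
    have h1 : Y ⊂ Z ∩ X := hYsub.ssubset_of_ne (Ne.symm hne)
    have h2 : Z ∩ X ⊂ Z := by
      refine Set.inter_subset_left.ssubset_of_ne (fun h => ?_)
      have h2 : a ∈ Z ∩ X := by rw [h]; exact haZ
      exact hXa h2.2
    exact hcov.2 (Z ∩ X) hZXmem ⟨h1, h2⟩
  by_cases hb : ∃ b, b < a ∧ b ∉ X
  · -- pick a minimal such b
    obtain ⟨b, hbS, hbmin⟩ : ∃ b ∈ {b | b < a ∧ b ∉ X},
        ∀ c ∈ {b | b < a ∧ b ∉ X}, id c ≤ id b → id b = id c := by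
      obtain ⟨b, hb'⟩ := (Set.toFinite {b | b < a ∧ b ∉ X}).exists_minimalFor id _ hb
      exact ⟨b, hb'.1, fun c hc hle => (hb'.2 hc hle).antisymm hle⟩
    obtain ⟨hba, hbX⟩ := hbS
    have hbZ : b ∈ Z := hF.down Z hZF haZ hba.le
    have hIiob : Set.Iio b ⊆ Y := by
      intro c hc
      have hca : c < a := hc.trans hba
      have hcX : c ∈ X := by
        by_contra hcX
        have := hbmin c ⟨hca, hcX⟩ hc.le
        simp only [id] at this
        exact absurd this hc.ne'
      have hcZ : c ∈ Z := hF.down Z hZF hbZ hc.le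
      exact hZX ▸ (⟨hcZ, hcX⟩ : c ∈ Z ∩ X)
    have hbY : b ∉ Y := fun h => hbX (hYX h)
    -- cover of Y containing b
    obtain ⟨C, hCF, hbC, hCcov⟩ := hF.cp b Y hYF hbY hIiob
    -- Z ⊆ C
    have hZC : Z ⊆ C := by
      have hmem : C ∩ Z ∈ F := hF.inter_mem C hCF Z hZF
      have h1 : Y ⊂ C ∩ Z := by
        refine (Set.subset_inter hCcov.1.1 hcov.1.1).ssubset_of_ne (fun h => ?_)
        exact hbY (h ▸ (⟨hbC, hbZ⟩ : b ∈ C ∩ Z))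
      by_contra hns
      have h2 : C ∩ Z ⊂ Z := by
        refine Set.inter_subset_right.ssubset_of_ne (fun h => hns ?_)
        intro z hz
        rw [← h] at hz
        exact hz.1
      exact hcov.2 (C ∩ Z) hmem ⟨h1, h2⟩
    have haC : a ∈ C := hZC haZ
    -- cover of X containing b
    obtain ⟨C', hC'F, hbC', hC'cov⟩ := hF.cp b X hXF hbX (hIiob.trans hYX)
    have haC' : a ∉ C' := hXT C' hC'F hC'cov
    -- C ⊆ C'
    have hCC' : C ⊆ C' := by
      have hmem : C ∩ C' ∈ F := hF.inter_mem C hCF C' hC'F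
      have h1 : Y ⊂ C ∩ C' := by
        refine (Set.subset_inter hCcov.1.1 (hYX.trans hC'cov.1.1)).ssubset_of_ne
          (fun h => ?_)
        exact hbY (h ▸ (⟨hbC, hbC'⟩ : b ∈ C ∩ C'))
      by_contra hns
      have h2 : C ∩ C' ⊂ C := by
        refine Set.inter_subset_left.ssubset_of_ne (fun h => hns ?_)
        intro z hz
        rw [← h] at hz
        exact hz.2
      exact hCcov.2 (C ∩ C') hmem ⟨h1, h2⟩
    exact haC' (hCC' haC)
  · -- Iio a ⊆ X : then X has a cover containing a, contradiction with X ∈ T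
    push_neg at hb
    have hIio : Set.Iio a ⊆ X := fun c hc => hb c hc
    obtain ⟨W, hWF, haW, hWcov⟩ := hF.cp a X hXF hXa hIio
    exact hXT W hWF hWcov haW

theorem extension_family_props {P : Type*} [PartialOrder P] [Finite P]
    {F : Set (Set P)} (hF : IsFaigle F) (a : P) (ha : Set.Iio a ≠ ∅) :
    letI T : Set (Set P) :=
      {X | X ∈ F ∧ a ∉ X ∧ ∀ Y ∈ F, CoversIn F X Y → a ∉ Y}
    letI N : Set (Set P) := (fun X => X ∪ {a}) '' T
    letI G : Set (Set P) := F ∪ N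
    F ∩ N = ∅ ∧
    (∀ X ∈ N ∪ T, ∀ Y ∈ G, Y ⊆ X → Y ∈ N ∪ T) ∧
    (∀ X ∈ T, ∀ Y ∈ G, Y ⊆ X → Y ∈ T) := by
  set T : Set (Set P) :=
    {X | X ∈ F ∧ a ∉ X ∧ ∀ Y ∈ F, CoversIn F X Y → a ∉ Y} with hTdef
  set N : Set (Set P) := (fun X => X ∪ {a}) '' T with hNdef
  set G : Set (Set P) := F ∪ N with hGdef
  have hFN : F ∩ N = ∅ := by
    ext Z
    simp only [Set.mem_inter_iff, Set.mem_empty_iff_false, iff_false, not_and]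
    rintro hZF ⟨X, ⟨hXF, hXa, hXT⟩, rfl⟩
    exact hXT (X ∪ {a}) hZF (coversIn_insert_one hXa) (by simp)
  have hT : ∀ X ∈ T, ∀ Y ∈ G, Y ⊆ X → Y ∈ T := by
    rintro X ⟨hXF, hXa, hXT⟩ Y hYG hYX
    have hYF : Y ∈ F := by
      rcases hYG with h | ⟨W, hWT, rfl⟩
      · exact h
      · exact absurd (hYX (by simp : a ∈ W ∪ {a})) hXa
    obtain ⟨h1, h2⟩ := T_downward hF a hXF hXa hXT hYF hYX
    exact ⟨hYF, h1, h2⟩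
  refine ⟨hFN, ?_, hT⟩
  rintro X hX Y hYG hYX
  rcases hX with hXN | hXT
  · obtain ⟨X₀, hX₀T, rfl⟩ := hXN
    rcases hYG with hYF | hYN
    · -- Y ∈ F, Y ⊆ X₀ ∪ {a}
      by_cases haY : a ∈ Y
      · exfalso
        -- Y' = Y ∩ X₀ ∈ T, but Y covers Y' and contains a
        obtain ⟨hX₀F, hX₀a, hX₀T'⟩ := hX₀T
        have hY'F : Y ∩ X₀ ∈ F := hF.inter_mem Y hYF X₀ hX₀F
        have hY'X₀ : Y ∩ X₀ ⊆ X₀ := Set.inter_subset_right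
        obtain ⟨_, hY'T⟩ := T_downward hF a hX₀F hX₀a hX₀T' hY'F hY'X₀
        have hYeq : Y = (Y ∩ X₀) ∪ {a} := by
          ext z
          constructor
          · intro hz
            rcases hYX hz with h | h
            · exact Or.inl ⟨hz, h⟩
            · exact Or.inr h
          · rintro (h | h)
            · exact h.1
            · exact (Set.mem_singleton_iff.mp h) ▸ haY
        have hcov : CoversIn F (Y ∩ X₀) Y := by
          have := coversIn_insert_one (F := F)
            (fun (h : a ∈ Y ∩ X₀) => hX₀a h.2)
          rwa [← hYeq] at this
        exact hY'T Y hYF hcov haY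
      · have hYX₀ : Y ⊆ X₀ := by
          intro z hz
          rcases hYX hz with h | h
          · exact h
          · exact absurd ((Set.mem_singleton_iff.mp h) ▸ hz) haY
        exact Or.inr (hT X₀ hX₀T Y (Or.inl hYF) hYX₀)
    · exact Or.inl hYN
  · exact Or.inr (hT X hXT Y hYG hYX)
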